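/- For every integer Δ ≥ 1, every finite set 𝒞 ⊂ ℝ^{d_I}, every finite set D ⊂ ℝ^{d_r}, and every positive integer l, there exist GIN parameters θ such that for all finite connected simple graphs G = (V,E) and G' = (V',E') with maximum degree at most Δ, vertex features x_v ∈ 𝒞 (resp. x'_{v'} ∈ 𝒞), labelings r ∈ D^V and r' ∈ D^{V'}, and vertices v ∈ V, v' ∈ V': if the level-l trees satisfy T(G,v,l) ≠ T(G',v',l) (computed with vertex labels a_u = (x_u, r_u)), then the GIN run on G with input features h_u = (x_u, r_u) and the GIN run on G' with input features h'_{u'} = (x'_{u'}, r'_{u'}) produce different output embeddings at v and v', i.e., z_v ≠ z'_{v'}. -/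

import Mathlib

set_option maxHeartbeats 1000000


/-- An MLP: a finite alternating composition of affine maps and the entrywise ReLU
activation `x ↦ max(x, 0)`. -/
inductive IsMLP : ∀ (a b : ℕ), ((Fin a → ℝ) → (Fin b → ℝ)) → Prop
  | affine (a b : ℕ) (W : Fin b → Fin a → ℝ) (c : Fin b → ℝ) :
      IsMLP a b (fun x i => (∑ j, W i j * x j) + c i)
  | comp (a b c : ℕ) (f : (Fin a → ℝ) → (Fin b → ℝ)) (g : (Fin b → ℝ) → (Fin c → ℝ)) :
      IsMLP a b f → IsMLP b c g →
      IsMLP a c (fun x => g (fun i => max (f x i) 0))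

/-- GIN parameters `θ`: a depth `K`, layer dimensions, MLPs `MLP_0, …, MLP_K`, and reals
`ε^(1), …, ε^(K)`; the last layer has dimension `dOut`. -/
structure GINParams (dIn dOut : ℕ) where
  K : ℕ
  dims : ℕ → ℕ
  hdims : dims K = dOut
  mlp0 : (Fin dIn → ℝ) → (Fin (dims 0) → ℝ)
  mlp : (l : ℕ) → (Fin (dims l) → ℝ) → (Fin (dims (l + 1)) → ℝ)
  eps : ℕ → ℝ
  mlp0_spec : IsMLP dIn (dims 0) mlp0
  mlp_spec : ∀ l, IsMLP (dims l) (dims (l + 1)) (mlp l)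

open Classical in
/-- The GIN layer embeddings: `z_v^(0) = MLP_0(h_v)` and
`z_v^(l) = MLP_l((1 + ε^(l)) z_v^(l−1) + ∑_{u ∈ N(v)} z_u^(l−1))`. -/
noncomputable def GINemb {dIn dOut : ℕ} (θ : GINParams dIn dOut) {V : Type} [Fintype V]
    (G : SimpleGraph V) (h : V → Fin dIn → ℝ) : (l : ℕ) → V → Fin (θ.dims l) → ℝ
  | 0 => fun v => θ.mlp0 (h v)
  | (l + 1) => fun v => θ.mlp l (fun i =>
      (1 + θ.eps (l + 1)) * GINemb θ G h l v i +
        ∑ u ∈ G.neighborFinset v, GINemb θ G h l u i)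

/-- The GIN output embeddings `z_v = z_v^(K)`. -/
noncomputable def GINout {dIn dOut : ℕ} (θ : GINParams dIn dOut) {V : Type} [Fintype V]
    (G : SimpleGraph V) (h : V → Fin dIn → ℝ) (v : V) : Fin dOut → ℝ :=
  fun i => GINemb θ G h θ.K v (Fin.cast θ.hdims.symm i)

/-- The type of level-`l` trees with labels in `A`. -/
def TreeT (A : Type) : ℕ → Type
  | 0 => A
  | (l + 1) => TreeT A l × Multiset (TreeT A l)

open Classical in
/-- The level-`l` tree of `v` in `G` with vertex labels `a`:
`T(G, v, 0) = a_v` and `T(G, v, l) = (T(G, v, l−1), {T(G, u, l−1) : u ∈ N(v)})`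
(the second component a multiset). -/
noncomputable def levelTree {V A : Type} [Fintype V] (G : SimpleGraph V) (a : V → A) :
    (l : ℕ) → V → TreeT A l
  | 0 => fun v => a v
  | (l + 1) => fun v =>
      (levelTree G a l v, (G.neighborFinset v).val.map (levelTree G a l))

open Finset in
lemma digits_inj (B : ℕ) : ∀ (K : ℕ) (f g : ℕ → ℕ), (∀ j, f j < B) → (∀ j, g j < B) →
    (∑ j ∈ range K, f j * B ^ j) = (∑ j ∈ range K, g j * B ^ j) → ∀ j < K, f j = g j := by
  intro K
  induction K with
  | zero => intro f g _ _ _ j hj; omega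
  | succ K ih =>
    intro f g hf hg hsum j hj
    have hB : 0 < B := lt_of_le_of_lt (Nat.zero_le _) (hf 0)
    have expand : ∀ h : ℕ → ℕ, (∑ j ∈ range (K+1), h j * B ^ j)
        = h 0 + B * ∑ j ∈ range K, h (j+1) * B ^ j := by
      intro h
      rw [Finset.sum_range_succ' (fun j => h j * B ^ j) K, Finset.mul_sum, add_comm]
      congr 1
      · simp
      · apply Finset.sum_congr rfl; intro i _; rw [pow_succ]; ring
    rw [expand f, expand g] at hsum
    have h0 : f 0 = g 0 := by
      have := congrArg (· % B) hsum
      simpa [Nat.add_mul_mod_self_left, Nat.mod_eq_of_lt (hf 0), Nat.mod_eq_of_lt (hg 0)] using this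
    have htail : (∑ j ∈ range K, f (j+1) * B ^ j) = (∑ j ∈ range K, g (j+1) * B ^ j) := by
      rw [h0] at hsum
      exact Nat.eq_of_mul_eq_mul_left hB (Nat.add_left_cancel hsum)
    rcases Nat.eq_zero_or_eq_succ_pred j with h | h
    · rw [h]; exact h0
    · rw [h]
      exact ih (fun j => f (j+1)) (fun j => g (j+1)) (fun j => hf _) (fun j => hg _) htail _ (by omega)

lemma multiset_map_injOn {α β : Type*} {S : Set α} {f : α → β} (hf : Set.InjOn f S) :
    ∀ (m m' : Multiset α), (∀ a ∈ m, a ∈ S) → (∀ a ∈ m', a ∈ S) →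
      m.map f = m'.map f → m = m' := by
  classical
  intro m
  induction m using Multiset.induction with
  | empty =>
    intro m' _ _ h
    simpa [eq_comm] using (Multiset.map_eq_zero.mp h.symm).symm
  | cons a m ih =>
    intro m' hm hm' h
    have hfa : f a ∈ m'.map f := by rw [← h]; simp
    obtain ⟨b, hb, hba⟩ := Multiset.mem_map.mp hfa
    have hab : b = a := hf (hm' b hb) (hm a (by simp)) hba
    subst hab
    obtain ⟨m'', rfl⟩ : ∃ m'', m' = b ::ₘ m'' := ⟨m'.erase b, (Multiset.cons_erase hb).symm⟩
    simp only [Multiset.map_cons] at h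
    have := ih m'' (fun x hx => hm x (by simp [hx])) (fun x hx => hm' x (by simp [hx]))
      ((Multiset.cons_inj_right _).mp h)
    rw [this]

open Finset in
lemma multiset_sum_pow_inj {B K Δ : ℕ} (hB : Δ < B) (m m' : Multiset ℕ)
    (hm : ∀ i ∈ m, i < K) (hm' : ∀ i ∈ m', i < K)
    (hc : Multiset.card m ≤ Δ) (hc' : Multiset.card m' ≤ Δ)
    (h : (m.map (B ^ ·)).sum = (m'.map (B ^ ·)).sum) : m = m' := by
  classical
  have sum_eq : ∀ (s : Multiset ℕ), (∀ i ∈ s, i < K) →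
      (s.map (B ^ ·)).sum = ∑ j ∈ range K, s.count j * B ^ j := by
    intro s hs
    rw [Finset.sum_multiset_map_count]
    rw [Finset.sum_subset (fun a ha => Finset.mem_range.mpr (hs a (Multiset.mem_toFinset.mp ha)))]
    · simp [smul_eq_mul]
    · intro x _ hx
      simp [Multiset.count_eq_zero_of_notMem (fun hxx => hx (Multiset.mem_toFinset.mpr hxx))]
  rw [sum_eq m hm, sum_eq m' hm'] at h
  have key := digits_inj B K (fun j => m.count j) (fun j => m'.count j)
    (fun j => lt_of_le_of_lt (le_trans (Multiset.count_le_card j m) hc) hB)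
    (fun j => lt_of_le_of_lt (le_trans (Multiset.count_le_card j m') hc') hB)
    h
  ext a
  by_cases ha : a < K
  · exact key a ha
  · rw [Multiset.count_eq_zero_of_notMem (fun hx => ha (hm a hx)),
      Multiset.count_eq_zero_of_notMem (fun hx => ha (hm' a hx))]

lemma isMLP_two_hidden (a b : ℕ) (ι κ : Type) [Fintype ι] [Fintype κ]
    (W1 : ι → Fin a → ℝ) (c1 : ι → ℝ) (W2 : κ → ι → ℝ) (c2 : κ → ℝ)
    (W3 : Fin b → κ → ℝ) (c3 : Fin b → ℝ) :
    IsMLP a b (fun x i =>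
      (∑ k : κ, W3 i k *
        max ((∑ q : ι, W2 k q * max ((∑ j, W1 q j * x j) + c1 q) 0) + c2 k) 0) + c3 i) := by
  classical
  let e1 : ι ≃ Fin (Fintype.card ι) := Fintype.equivFin ι
  let e2 : κ ≃ Fin (Fintype.card κ) := Fintype.equivFin κ
  have h1 := IsMLP.affine a (Fintype.card ι) (fun q' j => W1 (e1.symm q') j) (fun q' => c1 (e1.symm q'))
  have h2 := IsMLP.affine (Fintype.card ι) (Fintype.card κ)
      (fun k' q' => W2 (e2.symm k') (e1.symm q')) (fun k' => c2 (e2.symm k'))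
  have h3 := IsMLP.affine (Fintype.card κ) b (fun i k' => W3 i (e2.symm k')) c3
  have h12 := IsMLP.comp _ _ _ _ _ h1 h2
  have h := IsMLP.comp _ _ _ _ _ h12 h3
  convert h using 1
  funext x i
  simp only []
  congr 1
  rw [← Equiv.sum_comp e2.symm (fun k => W3 i k * max ((∑ q : ι, W2 k q * max ((∑ j, W1 q j * x j) + c1 q) 0) + c2 k) 0)]
  apply Finset.sum_congr rfl
  intro k' _
  congr 2
  rw [← Equiv.sum_comp e1.symm (fun q => W2 (e2.symm k') q * max ((∑ j, W1 q j * x j) + c1 q) 0)]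

lemma exists_mlp_interp {a b : ℕ} (S : Set (Fin a → ℝ)) (hS : S.Finite)
    (g : (Fin a → ℝ) → (Fin b → ℝ)) :
    ∃ f, IsMLP a b f ∧ ∀ s ∈ S, f s = g s := by
  classical
  set T := hS.toFinset with hT
  set n := T.card with hn
  let p : Fin n → (Fin a → ℝ) := fun k => ((T.equivFin.symm k : T) : Fin a → ℝ)
  have hp_inj : Function.Injective p := fun k j h =>
    T.equivFin.symm.injective (Subtype.ext h)
  let d : Fin n → Fin n → ℝ := fun k j => ∑ i, |p k i - p j i|
  have d_nonneg : ∀ k j, 0 ≤ d k j := fun k j =>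
    Finset.sum_nonneg fun i _ => abs_nonneg _
  have d_pos : ∀ k j, k ≠ j → 0 < d k j := by
    intro k j hkj
    have hne : p k ≠ p j := fun h => hkj (hp_inj h)
    obtain ⟨i, hi⟩ : ∃ i, p k i ≠ p j i := by
      by_contra h; push_neg at h; exact hne (funext h)
    exact Finset.sum_pos' (fun i _ => abs_nonneg _)
      ⟨i, Finset.mem_univ i, abs_pos.mpr (sub_ne_zero.mpr hi)⟩
  let M : ℝ := 1 + ∑ q : Fin n × Fin n, max (d q.1 q.2)⁻¹ 0
  have hM : ∀ k j, k ≠ j → 1 ≤ M * d k j := by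
    intro k j hkj
    have h1 : (d k j)⁻¹ ≤ M := by
      have hterm : (d k j)⁻¹ ≤ max (d k j)⁻¹ 0 := le_max_left _ _
      have hsum : max (d k j)⁻¹ 0 ≤ ∑ q : Fin n × Fin n, max (d q.1 q.2)⁻¹ 0 :=
        Finset.single_le_sum (f := fun q : Fin n × Fin n => max (d q.1 q.2)⁻¹ 0)
          (fun q _ => le_max_right _ _) (Finset.mem_univ (k, j))
      calc (d k j)⁻¹ ≤ max (d k j)⁻¹ 0 := hterm
        _ ≤ ∑ q : Fin n × Fin n, max (d q.1 q.2)⁻¹ 0 := hsum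
        _ ≤ M := by simp [M]
    have hd := d_pos k j hkj
    calc (1:ℝ) = (d k j)⁻¹ * d k j := (inv_mul_cancel₀ (ne_of_gt hd)).symm
      _ ≤ M * d k j := mul_le_mul_of_nonneg_right h1 (le_of_lt hd)
  -- the network
  let W1 : (Fin n × Fin a × Bool) → Fin a → ℝ := fun q j =>
    if j = q.2.1 then (if q.2.2 then 1 else -1) else 0
  let c1 : (Fin n × Fin a × Bool) → ℝ := fun q =>
    if q.2.2 then -(p q.1 q.2.1) else p q.1 q.2.1
  let W2 : Fin n → (Fin n × Fin a × Bool) → ℝ := fun k q => if q.1 = k then -M else 0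
  let c2 : Fin n → ℝ := fun _ => 1
  let W3 : Fin b → Fin n → ℝ := fun i k => g (p k) i
  let c3 : Fin b → ℝ := fun _ => 0
  refine ⟨_, isMLP_two_hidden a b (Fin n × Fin a × Bool) (Fin n) W1 c1 W2 c2 W3 c3, ?_⟩
  intro s hs
  have hsT : s ∈ T := hS.mem_toFinset.mpr hs
  set j₀ : Fin n := T.equivFin ⟨s, hsT⟩ with hj₀
  have hps : p j₀ = s := by simp [p, hj₀]
  -- evaluate layer 1
  have layer1 : ∀ q : Fin n × Fin a × Bool,
      (∑ j, W1 q j * s j) + c1 q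
        = if q.2.2 then s q.2.1 - p q.1 q.2.1 else p q.1 q.2.1 - s q.2.1 := by
    intro q
    have : (∑ j, W1 q j * s j) = (if q.2.2 then 1 else -1) * s q.2.1 := by
      rw [Finset.sum_eq_single q.2.1]
      · simp [W1]
      · intro j _ hj; simp [W1, hj]
      · simp
    rw [this]
    rcases q with ⟨k, i, bl⟩
    cases bl <;> simp [c1] <;> ring
  -- evaluate layer 2
  have layer2 : ∀ k : Fin n,
      (∑ q : Fin n × Fin a × Bool, W2 k q * max ((∑ j, W1 q j * s j) + c1 q) 0) + c2 k
        = 1 - M * d k j₀ := by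
    intro k
    have hsum : (∑ q : Fin n × Fin a × Bool, W2 k q * max ((∑ j, W1 q j * s j) + c1 q) 0)
        = ∑ q : Fin n × Fin a × Bool, (if q.1 = k then -M else 0) * max ((if q.2.2 then s q.2.1 - p q.1 q.2.1 else p q.1 q.2.1 - s q.2.1)) 0 := by
      apply Finset.sum_congr rfl
      intro q _
      rw [layer1 q]
    rw [hsum, Fintype.sum_prod_type]
    rw [Finset.sum_eq_single k]
    · have : (∑ y : Fin a × Bool, (if k = k then -M else 0) *
          max (if y.2 then s y.1 - p k y.1 else p k y.1 - s y.1) 0)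
          = -M * ∑ y : Fin a × Bool, max (if y.2 then s y.1 - p k y.1 else p k y.1 - s y.1) 0 := by
        rw [Finset.mul_sum]
        apply Finset.sum_congr rfl
        intro y _; simp
      rw [this]
      have : (∑ y : Fin a × Bool, max (if y.2 then s y.1 - p k y.1 else p k y.1 - s y.1) 0)
          = d k j₀ := by
        rw [Fintype.sum_prod_type]
        simp only [Fintype.sum_bool]
        rw [hps.symm]
        apply Finset.sum_congr rfl
        intro i _
        simp only [if_true, if_false]
        rw [show p j₀ i - p k i = -(p k i - p j₀ i) by ring]
        rw [add_comm]
        exact max_zero_add_max_neg_zero_eq_abs_self (p k i - p j₀ i)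
      rw [this]
      show -M * d k j₀ + 1 = 1 - M * d k j₀
      ring
    · intro k' _ hk'
      apply Finset.sum_eq_zero
      intro y _
      simp [hk']
    · simp
  -- final layer
  funext i
  show (∑ k, W3 i k * max ((∑ q : Fin n × Fin a × Bool, W2 k q * max ((∑ j, W1 q j * s j) + c1 q) 0) + c2 k) 0) + c3 i = g s i
  have hval : ∀ k, max ((∑ q : Fin n × Fin a × Bool, W2 k q * max ((∑ j, W1 q j * s j) + c1 q) 0) + c2 k) 0
      = if k = j₀ then 1 else 0 := by
    intro k
    rw [layer2 k]
    by_cases hk : k = j₀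
    · rw [if_pos hk, hk]
      have : d j₀ j₀ = 0 := by simp [d]
      rw [this]
      simp
    · have h1 := hM k j₀ hk
      have : 1 - M * d k j₀ ≤ 0 := by linarith
      rw [if_neg hk]
      exact max_eq_right this
  have : (∑ k, W3 i k * max ((∑ q : Fin n × Fin a × Bool, W2 k q * max ((∑ j, W1 q j * s j) + c1 q) 0) + c2 k) 0)
      = ∑ k, W3 i k * (if k = j₀ then 1 else 0) := by
    apply Finset.sum_congr rfl
    intro k _
    rw [hval k]
  rw [this]
  rw [Finset.sum_eq_single j₀]
  · simp [W3, c3, hps]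
  · intro k _ hk; simp [hk]
  · simp

namespace S12

open Classical

/-- realizable trees -/
def TreesSet {dI dr : ℕ} (Δ : ℕ) (C : Set (Fin dI → ℝ)) (D : Set (Fin dr → ℝ)) : (k : ℕ) → Set (TreeT ((Fin dI → ℝ) × (Fin dr → ℝ)) k)
  | 0 => C ×ˢ D
  | (k+1) => {p | p.1 ∈ TreesSet Δ C D k ∧ (∀ t ∈ p.2, t ∈ TreesSet Δ C D k) ∧ Multiset.card p.2 ≤ Δ}

lemma finite_multisets {α : Type*} {S : Set α} (hS : S.Finite) :
    ∀ n : ℕ, {m : Multiset α | (∀ a ∈ m, a ∈ S) ∧ Multiset.card m ≤ n}.Finite := by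
  intro n
  induction n with
  | zero =>
    apply Set.Finite.subset (Set.finite_singleton (0 : Multiset α))
    intro m hm
    simp only [Set.mem_setOf_eq] at hm
    have : m = 0 := Multiset.card_eq_zero.mp (Nat.le_zero.mp hm.2)
    simp [this]
  | succ n ih =>
    apply Set.Finite.subset (Set.Finite.union (Set.finite_singleton (0 : Multiset α))
      (Set.Finite.image (fun p : α × Multiset α => p.1 ::ₘ p.2) (hS.prod ih)))
    intro m hm
    simp only [Set.mem_setOf_eq] at hm
    rcases eq_or_ne m 0 with h | h
    · left; simp [h]
    · right
      obtain ⟨a, ha⟩ := Multiset.exists_mem_of_ne_zero h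
      refine ⟨(a, m.erase a), ⟨hm.1 a ha, ?_, ?_⟩, Multiset.cons_erase ha⟩
      · intro t ht; exact hm.1 t (Multiset.mem_of_mem_erase ht)
      · show Multiset.card (m.erase a) ≤ n
        rw [Multiset.card_erase_of_mem ha, Nat.pred_eq_sub_one]
        have : 0 < Multiset.card m := Multiset.card_pos.mpr h
        omega

variable {dI dr : ℕ} {Δ : ℕ} {C : Set (Fin dI → ℝ)} {D : Set (Fin dr → ℝ)}

lemma TreesSet_finite (hC : C.Finite) (hD : D.Finite) :
    ∀ k, (TreesSet Δ C D k).Finite := by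
  intro k
  induction k with
  | zero => exact hC.prod hD
  | succ k ih =>
    apply Set.Finite.subset ((ih.prod (finite_multisets ih Δ)))
    intro p hp
    exact ⟨hp.1, hp.2.1, hp.2.2⟩

noncomputable def Nt (Δ : ℕ) (hC : C.Finite) (hD : D.Finite) (k : ℕ) : ℕ := ((TreesSet_finite (Δ := Δ) hC hD k).toFinset).card

noncomputable def idx (Δ : ℕ) (hC : C.Finite) (hD : D.Finite) (k : ℕ) (t : TreeT ((Fin dI → ℝ) × (Fin dr → ℝ)) k) : ℕ :=
  if h : t ∈ (TreesSet_finite (Δ := Δ) hC hD k).toFinset then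
    (((TreesSet_finite hC hD k).toFinset.equivFin ⟨t, h⟩ : Fin _) : ℕ) else 0

lemma idx_lt (hC : C.Finite) (hD : D.Finite) {k : ℕ} {t} (ht : t ∈ TreesSet Δ C D k) : idx Δ hC hD k t < Nt Δ hC hD k := by
  have h : t ∈ (TreesSet_finite (Δ := Δ) hC hD k).toFinset := (TreesSet_finite hC hD k).mem_toFinset.mpr ht
  rw [idx, dif_pos h]
  exact ((TreesSet_finite hC hD k).toFinset.equivFin ⟨t, h⟩).isLt

lemma idx_injOn (hC : C.Finite) (hD : D.Finite) {k : ℕ} : Set.InjOn (idx Δ hC hD k) (TreesSet Δ C D k) := by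
  intro t ht t' ht' h
  have h1 : t ∈ (TreesSet_finite (Δ := Δ) hC hD k).toFinset := (TreesSet_finite hC hD k).mem_toFinset.mpr ht
  have h2 : t' ∈ (TreesSet_finite (Δ := Δ) hC hD k).toFinset := (TreesSet_finite hC hD k).mem_toFinset.mpr ht'
  rw [idx, dif_pos h1, idx, dif_pos h2] at h
  have := ((TreesSet_finite (Δ := Δ) hC hD k).toFinset.equivFin).injective (Fin.val_injective h)
  exact congrArg Subtype.val this

noncomputable def phin (Δ : ℕ) (hC : C.Finite) (hD : D.Finite) (k : ℕ) (t : TreeT ((Fin dI → ℝ) × (Fin dr → ℝ)) k) : ℕ :=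
  (Δ + 2) ^ idx Δ hC hD k t

lemma phin_injOn (hC : C.Finite) (hD : D.Finite) {k : ℕ} : Set.InjOn (phin Δ hC hD k) (TreesSet Δ C D k) := by
  intro t ht t' ht' h
  exact idx_injOn hC hD ht ht' (Nat.pow_right_injective (by omega) h)

noncomputable def aggn (Δ : ℕ) (hC : C.Finite) (hD : D.Finite) (k : ℕ) (p : TreeT ((Fin dI → ℝ) × (Fin dr → ℝ)) (k+1)) : ℕ :=
  (Δ + 2) ^ (Nt Δ hC hD k) * phin Δ hC hD k p.1 + (p.2.map (phin Δ hC hD k)).sum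

lemma aggn_injOn (hC : C.Finite) (hD : D.Finite) {k : ℕ} : Set.InjOn (aggn Δ hC hD k) (TreesSet Δ C D (k+1)) := by
  intro p hp p' hp' h
  obtain ⟨hp1, hp2, hp3⟩ := hp
  obtain ⟨hp1', hp2', hp3'⟩ := hp'
  set N := Nt Δ hC hD k with hN
  have key : ∀ q : TreeT ((Fin dI → ℝ) × (Fin dr → ℝ)) (k+1),
      aggn Δ hC hD k q = ((((N + idx Δ hC hD k q.1) ::ₘ q.2.map (idx Δ hC hD k)).map ((Δ+2) ^ ·)).sum) := by
    intro q
    rw [Multiset.map_cons, Multiset.sum_cons, Multiset.map_map]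
    rw [aggn, pow_add]
    rfl
  rw [key p, key p'] at h
  have hmm := multiset_sum_pow_inj (B := Δ + 2) (K := N + N) (Δ := Δ + 1) (by omega)
    _ _ ?_ ?_ ?_ ?_ h
  · have hhead : (N + idx Δ hC hD k p.1) ∈ ((N + idx Δ hC hD k p'.1) ::ₘ p'.2.map (idx Δ hC hD k)) := by
      rw [← hmm]; exact Multiset.mem_cons_self _ _
    rcases Multiset.mem_cons.mp hhead with heq | hmem
    · have h1 : p.1 = p'.1 := idx_injOn hC hD hp1 hp1' (by omega)
      have htails : p.2.map (idx Δ hC hD k) = p'.2.map (idx Δ hC hD k) := by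
        rw [h1] at hmm
        exact (Multiset.cons_inj_right _).mp hmm
      have h2 : p.2 = p'.2 :=
        multiset_map_injOn (idx_injOn hC hD) _ _ hp2 hp2' htails
      exact Prod.ext h1 h2
    · exfalso
      obtain ⟨t, ht, hti⟩ := Multiset.mem_map.mp hmem
      have := idx_lt hC hD (hp2' t ht)
      omega
  · intro i hi
    rcases Multiset.mem_cons.mp hi with h | h
    · have := idx_lt hC hD hp1; omega
    · obtain ⟨t, ht, rfl⟩ := Multiset.mem_map.mp h
      have := idx_lt hC hD (hp2 t ht); omega
  · intro i hi
    rcases Multiset.mem_cons.mp hi with h | h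
    · have := idx_lt hC hD hp1'; omega
    · obtain ⟨t, ht, rfl⟩ := Multiset.mem_map.mp h
      have := idx_lt hC hD (hp2' t ht); omega
  · rw [Multiset.card_cons, Multiset.card_map]; omega
  · rw [Multiset.card_cons, Multiset.card_map]; omega

noncomputable def phir (Δ : ℕ) (hC : C.Finite) (hD : D.Finite) (k : ℕ)
    (t : TreeT ((Fin dI → ℝ) × (Fin dr → ℝ)) k) : ℝ := (phin Δ hC hD k t : ℝ)

lemma phir_injOn (Δ : ℕ) (hC : C.Finite) (hD : D.Finite) {k : ℕ} :
    Set.InjOn (phir Δ hC hD k) (TreesSet Δ C D k) := by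
  intro t ht t' ht' h
  exact phin_injOn hC hD ht ht' (Nat.cast_injective h)

def S0 (C : Set (Fin dI → ℝ)) (D : Set (Fin dr → ℝ)) : Set (Fin (dI + dr) → ℝ) :=
  (fun p : (Fin dI → ℝ) × (Fin dr → ℝ) => Fin.append p.1 p.2) '' (C ×ˢ D)

noncomputable def g0 (Δ : ℕ) (hC : C.Finite) (hD : D.Finite) :
    (Fin (dI + dr) → ℝ) → (Fin 1 → ℝ) :=
  fun y _ => phir Δ hC hD 0 (fun i => y (Fin.castAdd dr i), fun j => y (Fin.natAdd dI j))

noncomputable def gk (Δ : ℕ) (hC : C.Finite) (hD : D.Finite) (k : ℕ) :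
    (Fin 1 → ℝ) → (Fin 1 → ℝ) :=
  fun y => if h : ∃ pp ∈ TreesSet Δ C D (k+1), ((aggn Δ hC hD k pp : ℕ) : ℝ) = y 0
    then fun _ => phir Δ hC hD (k+1) h.choose else fun _ => 0

noncomputable def theta (Δ : ℕ) (hC : C.Finite) (hD : D.Finite) (l : ℕ) :
    GINParams (dI + dr) 1 where
  K := l
  dims := fun _ => 1
  hdims := rfl
  mlp0 := (exists_mlp_interp (S0 C D) (Set.Finite.image _ (hC.prod hD)) (g0 Δ hC hD)).choose
  mlp := fun k => (exists_mlp_interp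
      ((fun pp => fun _ : Fin 1 => ((aggn Δ hC hD k pp : ℕ) : ℝ)) '' TreesSet Δ C D (k+1))
      (Set.Finite.image _ (TreesSet_finite hC hD (k+1))) (gk Δ hC hD k)).choose
  eps := fun n => ((Δ + 2 : ℕ) : ℝ) ^ (Nt Δ hC hD (n - 1)) - 1
  mlp0_spec :=
    (exists_mlp_interp (S0 C D) (Set.Finite.image _ (hC.prod hD)) (g0 Δ hC hD)).choose_spec.1
  mlp_spec := fun k => (exists_mlp_interp
      ((fun pp => fun _ : Fin 1 => ((aggn Δ hC hD k pp : ℕ) : ℝ)) '' TreesSet Δ C D (k+1))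
      (Set.Finite.image _ (TreesSet_finite hC hD (k+1))) (gk Δ hC hD k)).choose_spec.1

lemma mlp0_eval (Δ : ℕ) (hC : C.Finite) (hD : D.Finite) (l : ℕ) {xv : Fin dI → ℝ}
    {rv : Fin dr → ℝ} (hx : xv ∈ C) (hr : rv ∈ D) :
    (theta Δ hC hD l).mlp0 (Fin.append xv rv) = fun _ => phir Δ hC hD 0 (xv, rv) := by
  have hspec :=
    (exists_mlp_interp (S0 C D) (Set.Finite.image _ (hC.prod hD)) (g0 Δ hC hD)).choose_spec.2
  have hmem : Fin.append xv rv ∈ S0 C D := ⟨(xv, rv), Set.mk_mem_prod hx hr, rfl⟩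
  have h1 : (theta Δ hC hD l).mlp0 (Fin.append xv rv) = g0 Δ hC hD (Fin.append xv rv) :=
    hspec _ hmem
  rw [h1]
  have h2 : (fun i => Fin.append xv rv (Fin.castAdd dr i)) = xv :=
    funext fun i => Fin.append_left xv rv i
  have h3 : (fun j => Fin.append xv rv (Fin.natAdd dI j)) = rv :=
    funext fun j => Fin.append_right xv rv j
  funext z
  show phir Δ hC hD 0 (fun i => Fin.append xv rv (Fin.castAdd dr i),
    fun j => Fin.append xv rv (Fin.natAdd dI j)) = phir Δ hC hD 0 (xv, rv)
  rw [h2, h3]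

lemma mlp_eval (Δ : ℕ) (hC : C.Finite) (hD : D.Finite) (l k : ℕ)
    {pp : TreeT ((Fin dI → ℝ) × (Fin dr → ℝ)) (k+1)} (hpp : pp ∈ TreesSet Δ C D (k+1)) :
    (theta Δ hC hD l).mlp k (fun _ => ((aggn Δ hC hD k pp : ℕ) : ℝ))
      = fun _ => phir Δ hC hD (k+1) pp := by
  have hspec := (exists_mlp_interp
      ((fun pp => fun _ : Fin 1 => ((aggn Δ hC hD k pp : ℕ) : ℝ)) '' TreesSet Δ C D (k+1))
      (Set.Finite.image _ (TreesSet_finite hC hD (k+1))) (gk Δ hC hD k)).choose_spec.2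
  have hmem : (fun _ : Fin 1 => ((aggn Δ hC hD k pp : ℕ) : ℝ))
      ∈ (fun pp => fun _ : Fin 1 => ((aggn Δ hC hD k pp : ℕ) : ℝ)) '' TreesSet Δ C D (k+1) :=
    ⟨pp, hpp, rfl⟩
  have h2 : (theta Δ hC hD l).mlp k (fun _ => ((aggn Δ hC hD k pp : ℕ) : ℝ))
      = gk Δ hC hD k (fun _ => ((aggn Δ hC hD k pp : ℕ) : ℝ)) := hspec _ hmem
  rw [h2, gk]
  have hex : ∃ qq ∈ TreesSet Δ C D (k+1),
      ((aggn Δ hC hD k qq : ℕ) : ℝ) = (fun _ : Fin 1 => ((aggn Δ hC hD k pp : ℕ) : ℝ)) 0 :=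
    ⟨pp, hpp, rfl⟩
  rw [dif_pos hex]
  have hch := hex.choose_spec
  have : hex.choose = pp := aggn_injOn hC hD hch.1 hpp (Nat.cast_injective hch.2)
  rw [this]
  rfl

lemma tree_mem {V : Type} [Fintype V] (G : SimpleGraph V)
    (hdeg : ∀ w : V, (G.neighborSet w).ncard ≤ Δ)
    (a : V → (Fin dI → ℝ) × (Fin dr → ℝ)) (ha : ∀ w, a w ∈ C ×ˢ D) :
    ∀ (k : ℕ) (v : V), levelTree G a k v ∈ TreesSet Δ C D k := by
  intro k
  induction k with
  | zero => intro v; exact ha v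
  | succ k ih =>
    intro v
    refine ⟨ih v, ?_, ?_⟩
    · intro t ht
      obtain ⟨u, hu, rfl⟩ := Multiset.mem_map.mp ht
      exact ih u
    · show Multiset.card ((G.neighborFinset v).val.map (levelTree G a k)) ≤ Δ
      rw [Multiset.card_map]
      have hcard : (G.neighborFinset v).card = (G.neighborSet v).ncard := by
        rw [Set.ncard_eq_toFinset_card']
        rfl
      show (G.neighborFinset v).card ≤ Δ
      rw [hcard]
      exact hdeg v

lemma emb_eq (Δ : ℕ) (hC : C.Finite) (hD : D.Finite) (l : ℕ) {V : Type} [Fintype V]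
    (G : SimpleGraph V) (hdeg : ∀ w : V, (G.neighborSet w).ncard ≤ Δ)
    (x : V → Fin dI → ℝ) (r : V → Fin dr → ℝ) (hx : ∀ w, x w ∈ C) (hr : ∀ w, r w ∈ D) :
    ∀ (k : ℕ) (v : V),
      GINemb (theta Δ hC hD l) G (fun u => Fin.append (x u) (r u)) k v
        = fun _ => phir Δ hC hD k (levelTree G (fun u => (x u, r u)) k v) := by
  intro k
  induction k with
  | zero =>
    intro v
    show (theta Δ hC hD l).mlp0 (Fin.append (x v) (r v)) = _
    exact mlp0_eval Δ hC hD l (hx v) (hr v)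
  | succ k ih =>
    intro v
    show (theta Δ hC hD l).mlp k
      (fun i => (1 + (theta Δ hC hD l).eps (k+1))
          * GINemb (theta Δ hC hD l) G (fun u => Fin.append (x u) (r u)) k v i
        + ∑ u ∈ G.neighborFinset v,
            GINemb (theta Δ hC hD l) G (fun u => Fin.append (x u) (r u)) k u i) = _
    have harg : (fun i : Fin ((theta Δ hC hD l).dims k) => (1 + (theta Δ hC hD l).eps (k+1))
          * GINemb (theta Δ hC hD l) G (fun u => Fin.append (x u) (r u)) k v i
        + ∑ u ∈ G.neighborFinset v,
            GINemb (theta Δ hC hD l) G (fun u => Fin.append (x u) (r u)) k u i)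
        = fun _ : Fin 1 =>
            ((aggn Δ hC hD k (levelTree G (fun u => (x u, r u)) (k+1) v) : ℕ) : ℝ) := by
      funext i
      rw [ih v]
      have hsum : (∑ u ∈ G.neighborFinset v,
            GINemb (theta Δ hC hD l) G (fun u => Fin.append (x u) (r u)) k u i)
          = ∑ u ∈ G.neighborFinset v,
              phir Δ hC hD k (levelTree G (fun u => (x u, r u)) k u) := by
        apply Finset.sum_congr rfl
        intro u _
        rw [ih u]
      rw [hsum]
      have heps : (1 + (theta Δ hC hD l).eps (k+1))
          = ((Δ + 2 : ℕ) : ℝ) ^ (Nt Δ hC hD k) := by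
        show (1 + (((Δ + 2 : ℕ) : ℝ) ^ (Nt Δ hC hD (k + 1 - 1)) - 1)) = _
        rw [Nat.add_sub_cancel]
        ring
      rw [heps]
      show _ = ((aggn Δ hC hD k (levelTree G (fun u => (x u, r u)) k v,
          (G.neighborFinset v).val.map (levelTree G (fun u => (x u, r u)) k)) : ℕ) : ℝ)
      unfold aggn
      push_cast
      congr 1
      rw [Multiset.map_map, Multiset.map_map, Finset.sum_eq_multiset_sum]
      rfl
    rw [harg]
    exact mlp_eval Δ hC hD l k
      (tree_mem G hdeg (fun u => (x u, r u)) (fun w => Set.mk_mem_prod (hx w) (hr w)) (k+1) v)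


end S12

/-- For every `Δ ≥ 1`, finite sets `𝒞 ⊂ ℝ^{d_I}` and `D ⊂ ℝ^{d_r}`, and
positive integer `l`, there exist GIN parameters `θ` such that for all finite connected
simple graphs `G, G'` with maximum degree at most `Δ`, features in `𝒞`, labelings in `D`,
and vertices `v, v'`: if the level-`l` trees (with labels `a_u = (x_u, r_u)`) differ,
then the GIN (run with concatenated input features `(x_u, r_u)`) produces different
output embeddings at `v` and `v'`. -/
theorem stmt_12 (Δ : ℕ) (hΔ : 1 ≤ Δ) (dI dr : ℕ)
    (C : Set (Fin dI → ℝ)) (hC : C.Finite)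
    (D : Set (Fin dr → ℝ)) (hD : D.Finite)
    (l : ℕ) (hl : 0 < l) :
    ∃ (dOut : ℕ) (θ : GINParams (dI + dr) dOut),
      ∀ (V V' : Type) [Fintype V] [Fintype V']
        (G : SimpleGraph V) (G' : SimpleGraph V'),
        G.Connected → G'.Connected →
        (∀ w : V, (G.neighborSet w).ncard ≤ Δ) →
        (∀ w : V', (G'.neighborSet w).ncard ≤ Δ) →
        ∀ (x : V → Fin dI → ℝ) (x' : V' → Fin dI → ℝ),
          (∀ w, x w ∈ C) → (∀ w, x' w ∈ C) →
        ∀ (r : V → Fin dr → ℝ) (r' : V' → Fin dr → ℝ),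
          (∀ w, r w ∈ D) → (∀ w, r' w ∈ D) →
        ∀ (v : V) (v' : V'),
          levelTree G (fun u => (x u, r u)) l v ≠
            levelTree G' (fun u => (x' u, r' u)) l v' →
          GINout θ G (fun u => Fin.append (x u) (r u)) v ≠
            GINout θ G' (fun u => Fin.append (x' u) (r' u)) v' := by
  classical
  refine ⟨1, S12.theta Δ hC hD l, ?_⟩
  intro V V' _ _ G G' hGconn hG'conn hdeg hdeg' x x' hx hx' r r' hr hr' v v' hne hEq
  have h1 := S12.emb_eq Δ hC hD l G hdeg x r hx hr l v
  have h2 := S12.emb_eq Δ hC hD l G' hdeg' x' r' hx' hr' l v'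
  have hpt := congrFun hEq 0
  have e1 := congrFun h1 (Fin.cast (S12.theta Δ hC hD l).hdims.symm 0)
  have e2 := congrFun h2 (Fin.cast (S12.theta Δ hC hD l).hdims.symm 0)
  have hphi : S12.phir Δ hC hD l (levelTree G (fun u => (x u, r u)) l v)
      = S12.phir Δ hC hD l (levelTree G' (fun u => (x' u, r' u)) l v') := by
    rw [← e1, ← e2]
    exact hpt
  exact hne (S12.phin_injOn hC hD
    (S12.tree_mem G hdeg (fun u => (x u, r u)) (fun w => Set.mk_mem_prod (hx w) (hr w)) l v)
    (S12.tree_mem G' hdeg' (fun u => (x' u, r' u)) (fun w => Set.mk_mem_prod (hx' w) (hr' w)) l v')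
    (Nat.cast_injective hphi))
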